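/- Let k₀, k₁, k₂, k₃, a, b, θ ∈ ℝ with k₀ab ≠ 0, let η ∈ ℝ with η ≠ 0, and set ψ(u,v) = k₀( (cosθ/(2ab))(a²u² − b²v²) + uv·sinθ ) − ab(k₁u + k₂v + k₃). Let u, v : U → ℝ be smooth functions on an open set U ⊆ ℝ² satisfying the 7-parameter system u_{xt} = ab·sinθ·[u_x·ψ(u,v) − k₂] − b²·cosθ·[v_x·ψ(u,v) + k₁] + k₀u, v_{xt} = −a²·cosθ·[u_x·ψ(u,v) − k₂] − ab·sinθ·[v_x·ψ(u,v) + k₁] + k₀v on U. Define F₁₁ = η[a·sin(θ/2)·u_x − b·cos(θ/2)·v_x], F₁₂ = (1/η)[b·cos(θ/2)·ψ_u(u,v) + a·sin(θ/2)·ψ_v(u,v)], F₂₁ = η², F₂₂ = k₀/η² − ab·ψ(u,v), F₃₁ = η[a·cos(θ/2)·u_x + b·sin(θ/2)·v_x], F₃₂ = (1/η)[−b·sin(θ/2)·ψ_u(u,v) + a·cos(θ/2)·ψ_v(u,v)]. Then on U the structure equations with δ = 1 hold: −∂_t F₁₁ + ∂_x F₁₂ = F₃₁F₂₂ − F₃₂F₂₁,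 −∂_t F₂₁ + ∂_x F₂₂ = F₁₁F₃₂ − F₁₂F₃₁, −∂_t F₃₁ + ∂_x F₃₂ = F₁₁F₂₂ − F₁₂F₂₁; hence this 7-parameter system describes pseudospherical surfaces with these associated functions. -/

import Mathlib

open Real

set_option maxHeartbeats 2000000

/-- Partial derivative in the `x` direction of a function on the `(x, t)` plane. -/
noncomputable def pdx (f : ℝ × ℝ → ℝ) (p : ℝ × ℝ) : ℝ := fderiv ℝ f p (1, 0)

/-- Partial derivative in the `t` direction of a function on the `(x, t)` plane. -/
noncomputable def pdt (f : ℝ × ℝ → ℝ) (p : ℝ × ℝ) : ℝ := fderiv ℝ f p (0, 1)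

/-- The structure equations of a surface of constant Gaussian curvature `-δ`. -/
def StructEqs (δ : ℝ) (U : Set (ℝ × ℝ)) (F11 F12 F21 F22 F31 F32 : ℝ × ℝ → ℝ) : Prop :=
  ∀ p ∈ U,
    -(pdt F11 p) + pdx F12 p = F31 p * F22 p - F32 p * F21 p ∧
    -(pdt F21 p) + pdx F22 p = F11 p * F32 p - F12 p * F31 p ∧
    -(pdt F31 p) + pdx F32 p = δ * (F11 p * F22 p - F12 p * F21 p)

/-- Partial derivative of a function of two real variables with respect to the first variable. -/
noncomputable def d1 (f : ℝ × ℝ → ℝ) (q : ℝ × ℝ) : ℝ := fderiv ℝ f q (1, 0)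

/-- Partial derivative of a function of two real variables with respect to the second variable. -/
noncomputable def d2 (f : ℝ × ℝ → ℝ) (q : ℝ × ℝ) : ℝ := fderiv ℝ f q (0, 1)

/-- The 7-parameter system (38) describes pseudospherical surfaces. -/
theorem seven_param_system_describes_pss (k0 k1 k2 k3 a b θ η : ℝ)
    (hk : k0 * a * b ≠ 0) (hη : η ≠ 0)
    (ψ : ℝ × ℝ → ℝ)
    (hψ : ∀ w : ℝ × ℝ,
      ψ w = k0 * (Real.cos θ / (2 * a * b) * (a ^ 2 * w.1 ^ 2 - b ^ 2 * w.2 ^ 2)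
              + w.1 * w.2 * Real.sin θ) - a * b * (k1 * w.1 + k2 * w.2 + k3))
    (U : Set (ℝ × ℝ)) (hU : IsOpen U)
    (u v : ℝ × ℝ → ℝ)
    (hu : ContDiffOn ℝ (⊤ : ℕ∞) u U) (hv : ContDiffOn ℝ (⊤ : ℕ∞) v U)
    (heq1 : ∀ p ∈ U, pdt (pdx u) p =
      a * b * Real.sin θ * (pdx u p * ψ (u p, v p) - k2)
        - b ^ 2 * Real.cos θ * (pdx v p * ψ (u p, v p) + k1) + k0 * u p)
    (heq2 : ∀ p ∈ U, pdt (pdx v) p =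
      -(a ^ 2) * Real.cos θ * (pdx u p * ψ (u p, v p) - k2)
        - a * b * Real.sin θ * (pdx v p * ψ (u p, v p) + k1) + k0 * v p) :
    StructEqs 1 U
      (fun q => η * (a * Real.sin (θ / 2) * pdx u q - b * Real.cos (θ / 2) * pdx v q))
      (fun q => 1 / η * (b * Real.cos (θ / 2) * d1 ψ (u q, v q)
                  + a * Real.sin (θ / 2) * d2 ψ (u q, v q)))
      (fun _ => η ^ 2)
      (fun q => k0 / η ^ 2 - a * b * ψ (u q, v q))
      (fun q => η * (a * Real.cos (θ / 2) * pdx u q + b * Real.sin (θ / 2) * pdx v q))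
      (fun q => 1 / η * (-(b * Real.sin (θ / 2)) * d1 ψ (u q, v q)
                  + a * Real.cos (θ / 2) * d2 ψ (u q, v q))) := by
  have ha : a ≠ 0 := fun h => hk (by rw [h]; ring)
  have hb : b ≠ 0 := fun h => hk (by rw [h]; ring)
  -- explicit derivative of ψ
  have hψD : ∀ w : ℝ × ℝ, HasFDerivAt ψ
      ((k0 * (Real.cos θ / (2*a*b) * (2*a^2*w.1) + w.2 * Real.sin θ) - a*b*k1) • ContinuousLinearMap.fst ℝ ℝ ℝ
     + (k0 * (Real.cos θ / (2*a*b) * (-(2*b^2*w.2)) + w.1 * Real.sin θ) - a*b*k2) • ContinuousLinearMap.snd ℝ ℝ ℝ) w := by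
    intro w
    have hψf : ψ = fun w : ℝ×ℝ => k0 * (Real.cos θ / (2 * a * b) * (a ^ 2 * (w.1 * w.1) - b ^ 2 * (w.2 * w.2))
                + w.1 * w.2 * Real.sin θ) - a * b * (k1 * w.1 + k2 * w.2 + k3) := by
      funext w; rw [hψ w]; ring
    rw [hψf]
    have h1 : HasFDerivAt (fun w : ℝ×ℝ => w.1) (ContinuousLinearMap.fst ℝ ℝ ℝ) w := hasFDerivAt_fst
    have h2 : HasFDerivAt (fun w : ℝ×ℝ => w.2) (ContinuousLinearMap.snd ℝ ℝ ℝ) w := hasFDerivAt_snd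
    have big := (((((((h1.mul h1).const_mul (a^2)).sub ((h2.mul h2).const_mul (b^2))).const_mul
        (Real.cos θ / (2*a*b))).add ((h1.mul h2).mul_const (Real.sin θ))).const_mul k0).sub
        ((((h1.const_mul k1).add (h2.const_mul k2)).add_const k3).const_mul (a*b)))
    refine big.congr_fderiv ?_
    refine ContinuousLinearMap.ext fun x => ?_
    simp [ContinuousLinearMap.smul_apply, ContinuousLinearMap.add_apply, ContinuousLinearMap.sub_apply]
    ring
  have hd1 : ∀ w : ℝ × ℝ, d1 ψ w
      = k0 * (Real.cos θ / (2*a*b) * (2*a^2*w.1) + w.2 * Real.sin θ) - a*b*k1 := by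
    intro w
    rw [d1, (hψD w).fderiv]
    simp
  have hd2 : ∀ w : ℝ × ℝ, d2 ψ w
      = k0 * (Real.cos θ / (2*a*b) * (-(2*b^2*w.2)) + w.1 * Real.sin θ) - a*b*k2 := by
    intro w
    rw [d2, (hψD w).fderiv]
    simp
  intro p hp
  have hmem : U ∈ nhds p := hU.mem_nhds hp
  have hcu := hu.contDiffAt hmem
  have hcv := hv.contDiffAt hmem
  have hup : DifferentiableAt ℝ u p := hcu.differentiableAt (by simp)
  have hvp : DifferentiableAt ℝ v p := hcv.differentiableAt (by simp)
  have huxd : DifferentiableAt ℝ (pdx u) p := by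
    have h := (hcu.fderiv_right (m := (⊤:ℕ∞)) (by simp)).clm_apply (contDiffAt_const (c := ((1:ℝ),(0:ℝ))))
    exact h.differentiableAt (by simp)
  have hvxd : DifferentiableAt ℝ (pdx v) p := by
    have h := (hcv.fderiv_right (m := (⊤:ℕ∞)) (by simp)).clm_apply (contDiffAt_const (c := ((1:ℝ),(0:ℝ))))
    exact h.differentiableAt (by simp)
  -- derivatives of the F's
  have e11t : pdt (fun q => η * (a * Real.sin (θ / 2) * pdx u q - b * Real.cos (θ / 2) * pdx v q)) p
      = η * (a * Real.sin (θ / 2) * pdt (pdx u) p - b * Real.cos (θ / 2) * pdt (pdx v) p) := by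
    rw [pdt, (show HasFDerivAt (fun q => η * (a * Real.sin (θ / 2) * pdx u q - b * Real.cos (θ / 2) * pdx v q)) _ p from ((huxd.hasFDerivAt.const_mul (a * Real.sin (θ / 2))).sub
      (hvxd.hasFDerivAt.const_mul (b * Real.cos (θ / 2)))).const_mul η).fderiv]
    simp [pdt]
    try ring
  have e31t : pdt (fun q => η * (a * Real.cos (θ / 2) * pdx u q + b * Real.sin (θ / 2) * pdx v q)) p
      = η * (a * Real.cos (θ / 2) * pdt (pdx u) p + b * Real.sin (θ / 2) * pdt (pdx v) p) := by
    rw [pdt, (show HasFDerivAt (fun q => η * (a * Real.cos (θ / 2) * pdx u q + b * Real.sin (θ / 2) * pdx v q)) _ p from ((huxd.hasFDerivAt.const_mul (a * Real.cos (θ / 2))).add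
      (hvxd.hasFDerivAt.const_mul (b * Real.sin (θ / 2)))).const_mul η).fderiv]
    simp [pdt]
    try ring
  have e21t : pdt (fun _ : ℝ×ℝ => η ^ 2) p = 0 := by
    simp [pdt]
    try ring
  have hUV : HasFDerivAt (fun q => (u q, v q)) ((fderiv ℝ u p).prod (fderiv ℝ v p)) p :=
    hup.hasFDerivAt.prodMk hvp.hasFDerivAt
  have hψc : HasFDerivAt (fun q => ψ (u q, v q))
      (((k0 * (Real.cos θ / (2*a*b) * (2*a^2*(u p)) + (v p) * Real.sin θ) - a*b*k1) • ContinuousLinearMap.fst ℝ ℝ ℝ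
      + (k0 * (Real.cos θ / (2*a*b) * (-(2*b^2*(v p))) + (u p) * Real.sin θ) - a*b*k2) • ContinuousLinearMap.snd ℝ ℝ ℝ).comp
        ((fderiv ℝ u p).prod (fderiv ℝ v p))) p :=
    (hψD (u p, v p)).comp p hUV
  have e22x : pdx (fun q => k0 / η ^ 2 - a * b * ψ (u q, v q)) p
      = -(a*b*((k0 * (Real.cos θ / (2*a*b) * (2*a^2*(u p)) + (v p) * Real.sin θ) - a*b*k1) * pdx u p
        + (k0 * (Real.cos θ / (2*a*b) * (-(2*b^2*(v p))) + (u p) * Real.sin θ) - a*b*k2) * pdx v p)) := by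
    rw [pdx, ((hψc.const_mul (a*b)).const_sub (k0 / η ^ 2)).fderiv]
    simp [pdx]
    try ring
  -- F12 and F32 rewritten explicitly
  have hF12 : (fun q => 1 / η * (b * Real.cos (θ / 2) * d1 ψ (u q, v q)
                  + a * Real.sin (θ / 2) * d2 ψ (u q, v q)))
      = fun q => 1 / η * (b * Real.cos (θ / 2) * (k0 * (Real.cos θ / (2*a*b) * (2*a^2*(u q)) + (v q) * Real.sin θ) - a*b*k1)
                  + a * Real.sin (θ / 2) * (k0 * (Real.cos θ / (2*a*b) * (-(2*b^2*(v q))) + (u q) * Real.sin θ) - a*b*k2)) := by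
    funext q; rw [hd1, hd2]
  have hF32 : (fun q => 1 / η * (-(b * Real.sin (θ / 2)) * d1 ψ (u q, v q)
                  + a * Real.cos (θ / 2) * d2 ψ (u q, v q)))
      = fun q => 1 / η * (-(b * Real.sin (θ / 2)) * (k0 * (Real.cos θ / (2*a*b) * (2*a^2*(u q)) + (v q) * Real.sin θ) - a*b*k1)
                  + a * Real.cos (θ / 2) * (k0 * (Real.cos θ / (2*a*b) * (-(2*b^2*(v q))) + (u q) * Real.sin θ) - a*b*k2)) := by
    funext q; rw [hd1, hd2]
  have inner1 : HasFDerivAt (fun q => k0 * (Real.cos θ / (2*a*b) * (2*a^2*(u q)) + (v q) * Real.sin θ) - a*b*k1)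
      ((k0:ℝ) • ((Real.cos θ / (2*a*b)) • ((2*a^2:ℝ) • fderiv ℝ u p) + (Real.sin θ) • fderiv ℝ v p)) p := by
    have := ((((hup.hasFDerivAt.const_mul (2*a^2)).const_mul (Real.cos θ / (2*a*b))).add
      (hvp.hasFDerivAt.mul_const (Real.sin θ))).const_mul k0).sub_const (a*b*k1)
    refine this.congr_fderiv ?_
    try module
  have inner2 : HasFDerivAt (fun q => k0 * (Real.cos θ / (2*a*b) * (-(2*b^2*(v q))) + (u q) * Real.sin θ) - a*b*k2)
      ((k0:ℝ) • ((Real.cos θ / (2*a*b)) • (-((2*b^2:ℝ) • fderiv ℝ v p)) + (Real.sin θ) • fderiv ℝ u p)) p := by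
    have := (((((hvp.hasFDerivAt.const_mul (2*b^2)).neg).const_mul (Real.cos θ / (2*a*b))).add
      (hup.hasFDerivAt.mul_const (Real.sin θ))).const_mul k0).sub_const (a*b*k2)
    refine this.congr_fderiv ?_
    try module
  have e12x : pdx (fun q => 1 / η * (b * Real.cos (θ / 2) * d1 ψ (u q, v q)
                  + a * Real.sin (θ / 2) * d2 ψ (u q, v q))) p
      = 1 / η * (b * Real.cos (θ / 2) * (k0 * (Real.cos θ / (2*a*b) * (2*a^2* pdx u p) + pdx v p * Real.sin θ))
                  + a * Real.sin (θ / 2) * (k0 * (Real.cos θ / (2*a*b) * (-(2*b^2* pdx v p)) + pdx u p * Real.sin θ))) := by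
    rw [hF12, pdx,
      (show HasFDerivAt (fun q => 1 / η * (b * Real.cos (θ / 2) * (k0 * (Real.cos θ / (2*a*b) * (2*a^2*(u q)) + (v q) * Real.sin θ) - a*b*k1)
                  + a * Real.sin (θ / 2) * (k0 * (Real.cos θ / (2*a*b) * (-(2*b^2*(v q))) + (u q) * Real.sin θ) - a*b*k2))) _ p from
        ((inner1.const_mul (b * Real.cos (θ / 2))).add (inner2.const_mul (a * Real.sin (θ / 2)))).const_mul (1/η)).fderiv]
    simp [pdx]
    try ring
  have e32x : pdx (fun q => 1 / η * (-(b * Real.sin (θ / 2)) * d1 ψ (u q, v q)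
                  + a * Real.cos (θ / 2) * d2 ψ (u q, v q))) p
      = 1 / η * (-(b * Real.sin (θ / 2)) * (k0 * (Real.cos θ / (2*a*b) * (2*a^2* pdx u p) + pdx v p * Real.sin θ))
                  + a * Real.cos (θ / 2) * (k0 * (Real.cos θ / (2*a*b) * (-(2*b^2* pdx v p)) + pdx u p * Real.sin θ))) := by
    rw [hF32, pdx,
      (show HasFDerivAt (fun q => 1 / η * (-(b * Real.sin (θ / 2)) * (k0 * (Real.cos θ / (2*a*b) * (2*a^2*(u q)) + (v q) * Real.sin θ) - a*b*k1)
                  + a * Real.cos (θ / 2) * (k0 * (Real.cos θ / (2*a*b) * (-(2*b^2*(v q))) + (u q) * Real.sin θ) - a*b*k2))) _ p from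
        ((inner1.const_mul (-(b * Real.sin (θ / 2)))).add (inner2.const_mul (a * Real.cos (θ / 2)))).const_mul (1/η)).fderiv]
    simp [pdx]
    try ring
  have hs2 : Real.sin θ = 2 * Real.sin (θ/2) * Real.cos (θ/2) := by
    have h := Real.sin_two_mul (θ/2); rw [show 2*(θ/2) = θ by ring] at h; linarith
  have hc2 : Real.cos θ = 2*Real.cos (θ/2)^2 - 1 := by
    have h := Real.cos_two_mul (θ/2); rw [show 2*(θ/2) = θ by ring] at h; linarith
  have hpy := Real.sin_sq_add_cos_sq (θ/2)
  refine ⟨?_, ?_, ?_⟩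
  · rw [e11t, e12x]
    simp only [hd1, hd2]
    rw [heq1 p hp, heq2 p hp, hs2, hc2]
    field_simp
    linear_combination ((-2)*Real.cos (θ/2)*(ψ (u p, v p))*(pdx u p)*η^2*a^2*b + (2)*Real.cos (θ/2)*η^2*a^2*b*k2 + (2)*Real.cos (θ/2)*(pdx u p)*a*k0 + (-2)*Real.cos (θ/2)*(v p)*η^2*b*k0) * hpy
  · rw [e21t, e22x]
    simp only [hd1, hd2]
    rw [hs2, hc2]
    field_simp
    linear_combination ((-1)*(pdx u p)*(u p)*a^2*k0 + (2)*Real.sin (θ/2)*Real.cos (θ/2)*(pdx u p)*(v p)*a*b*k0 + (-1)*(pdx u p)*a^2*b^2*k1 + (-2)*Real.cos (θ/2)^2*(pdx v p)*(v p)*b^2*k0 + (1)*(pdx v p)*(v p)*b^2*k0 + (2)*Real.cos (θ/2)^2*(pdx u p)*(u p)*a^2*k0 + (2)*Real.sin (θ/2)*Real.cos (θ/2)*(pdx v p)*(u p)*a*b*k0 + (-1)*(pdx v p)*a^2*b^2*k2) * hpy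
  · rw [e31t, e32x]
    simp only [hd1, hd2]
    rw [heq1 p hp, heq2 p hp, hs2, hc2]
    field_simp
    linear_combination ((2)*Real.cos (θ/2)*(ψ (u p, v p))*(pdx v p)*η^2*a*b^2 + (2)*Real.cos (θ/2)*η^2*a*b^2*k1 + (-2)*Real.cos (θ/2)*(pdx v p)*b*k0 + (2)*Real.cos (θ/2)*(u p)*η^2*a*k0) * hpy
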